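/- For all a, b > 0 there exists c > 0 depending only on a and b such that for every n and every n×n real matrix A = I + X which is symmetric positive definite with X_{jj} = 0 for all j, |X_{jk}| ≤ a/n for all j,k, and ‖A^{−1}‖₂ ≤ b, the condition numbers satisfy μ_∞(A) = μ₁(A) ≤ c·μ₂(A), where μ_p(A) = ‖A‖_p·‖A^{−1}‖_p. -/

import Mathlib

open MeasureTheory Matrix Finset

/-- The ℓ^p norm on `Fin n → ℝ` (with `p = ⊤` the maximum norm). -/
noncomputable def lpnorm {n : ℕ} (p : ENNReal) (x : Fin n → ℝ) : ℝ :=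
  if p = ⊤ then ⨆ j, |x j| else (∑ j, |x j| ^ p.toReal) ^ (1 / p.toReal)

/-- The operator norm induced by the ℓ^p vector norm. -/
noncomputable def opNorm {n : ℕ} (p : ENNReal) (A : Matrix (Fin n) (Fin n) ℝ) : ℝ :=
  sSup {c : ℝ | ∃ x : Fin n → ℝ, x ≠ 0 ∧ c = lpnorm p (A.mulVec x) / lpnorm p x}

/-- Condition (A): `A = I + X` is symmetric positive definite, `X` has zero diagonal,
`|X_{jk}| ≤ a/n` for all `j,k`, and `‖A⁻¹‖₂ ≤ b`. -/
def CondA {n : ℕ} (a b : ℝ) (A : Matrix (Fin n) (Fin n) ℝ) : Prop :=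
  A.IsSymm ∧ A.PosDef ∧ (∀ j, A j j = 1) ∧
    (∀ j k, j ≠ k → |A j k| ≤ a / n) ∧ opNorm 2 A⁻¹ ≤ b

/-- The cube `U_n(ρ) = {θ ∈ ℝⁿ : |θ_j| ≤ ρ for all j}`. -/
def Uset (n : ℕ) (ρ : ℝ) : Set (Fin n → ℝ) := {θ | ∀ j, |θ j| ≤ ρ}

/-- Conditions (H1)–(H2): `H` is C¹ with `H(θ) ≤ c₁ θᵀAθ/n` and
`‖∇H(θ)‖_∞ ≤ c₂ (‖θ‖_∞³ + ‖θ‖_∞)/n`.  (The norm `‖θ‖` on `Fin n → ℝ` is the sup norm.) -/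
def CondH {n : ℕ} (c₁ c₂ : ℝ) (A : Matrix (Fin n) (Fin n) ℝ) (H : (Fin n → ℝ) → ℝ) : Prop :=
  ContDiff ℝ 1 H ∧
    (∀ θ, H θ ≤ c₁ * (θ ⬝ᵥ A.mulVec θ) / n) ∧
    (∀ θ (j : Fin n), |fderiv ℝ H θ (Pi.single j 1)| ≤ c₂ * (‖θ‖ ^ 3 + ‖θ‖) / n)

namespace CNE
variable {n : ℕ}

lemma lpnorm_one_def (x : Fin n → ℝ) : lpnorm 1 x = ∑ j, |x j| := by
  simp [lpnorm]

lemma lpnorm_two_def (x : Fin n → ℝ) : lpnorm 2 x = Real.sqrt (∑ j, |x j| ^ 2) := by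
  rw [lpnorm, if_neg (by simp), Real.sqrt_eq_rpow]
  norm_num

lemma lpnorm_top_def (x : Fin n → ℝ) : lpnorm ⊤ x = ⨆ j, |x j| := if_pos rfl


def IsP (p : ENNReal) : Prop := p = 1 ∨ p = 2 ∨ p = ⊤

lemma abs_le_lpnorm {p : ENNReal} (hp : IsP p) (x : Fin n → ℝ) (j : Fin n) :
    |x j| ≤ lpnorm p x := by
  rcases hp with rfl | rfl | rfl
  · rw [lpnorm_one_def]
    exact Finset.single_le_sum (fun k _ => abs_nonneg (x k)) (Finset.mem_univ j)
  · rw [lpnorm_two_def]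
    have h1 : |x j| = Real.sqrt (|x j| ^ 2) := by rw [Real.sqrt_sq (abs_nonneg _)]
    rw [h1]
    exact Real.sqrt_le_sqrt (Finset.single_le_sum
        (fun k _ => sq_nonneg (|x k|)) (Finset.mem_univ j))
  · rw [lpnorm_top_def]
    exact le_ciSup (Set.Finite.bddAbove (Set.finite_range fun k => |x k|)) j

lemma lpnorm_nonneg {p : ENNReal} (hp : IsP p) (x : Fin n → ℝ) : 0 ≤ lpnorm p x := by
  rcases hp with rfl | rfl | rfl
  · rw [lpnorm_one_def]; positivity
  · rw [lpnorm_two_def]; positivity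
  · rw [lpnorm_top_def]; exact Real.iSup_nonneg fun j => abs_nonneg _

lemma lpnorm_pos {p : ENNReal} (hp : IsP p) {x : Fin n → ℝ} (hx : x ≠ 0) :
    0 < lpnorm p x := by
  obtain ⟨j, hj⟩ := Function.ne_iff.mp hx
  have h1 : 0 < |x j| := abs_pos.mpr hj
  exact lt_of_lt_of_le h1 (abs_le_lpnorm hp x j)

lemma lpnorm_two_le_one (x : Fin n → ℝ) : lpnorm 2 x ≤ lpnorm 1 x := by
  rw [lpnorm_two_def, lpnorm_one_def]
  calc Real.sqrt (∑ j, |x j| ^ 2) ≤ Real.sqrt ((∑ j, |x j|) ^ 2) :=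
      Real.sqrt_le_sqrt (Finset.sum_sq_le_sq_sum_of_nonneg fun j _ => abs_nonneg _)
  _ = ∑ j, |x j| := Real.sqrt_sq (by positivity)

lemma mulVec_abs_le (A : Matrix (Fin n) (Fin n) ℝ) (x : Fin n → ℝ) (j : Fin n) :
    |A.mulVec x j| ≤ ∑ k, |A j k| * |x k| := by
  rw [Matrix.mulVec, dotProduct]
  exact (Finset.abs_sum_le_sum_abs _ _).trans (le_of_eq (Finset.sum_congr rfl
    fun k _ => abs_mul _ _))

/-- Cauchy–Schwarz in lpnorm-2 form. -/
lemma abs_dot_le (u v : Fin n → ℝ) : |∑ l, u l * v l| ≤ lpnorm 2 u * lpnorm 2 v := by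
  rw [lpnorm_two_def, lpnorm_two_def]
  have h1 : |∑ l, u l * v l| ≤ ∑ l, |u l| * |v l| :=
    (Finset.abs_sum_le_sum_abs _ _).trans (le_of_eq (Finset.sum_congr rfl
      fun k _ => abs_mul _ _))
  refine h1.trans ?_
  have h2 := Finset.sum_mul_sq_le_sq_mul_sq Finset.univ (fun l => |u l|) (fun l => |v l|)
  have h3 : ∑ l, |u l| * |v l| = Real.sqrt ((∑ l, |u l| * |v l|) ^ 2) := by
    rw [Real.sqrt_sq (by positivity)]
  rw [h3, ← Real.sqrt_mul (by positivity : (0:ℝ) ≤ ∑ j, |u j| ^ 2)]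
  exact Real.sqrt_le_sqrt h2


lemma lpnorm_mulVec_le_total {p : ENNReal} (hp : IsP p) (A : Matrix (Fin n) (Fin n) ℝ)
    (x : Fin n → ℝ) : lpnorm p (A.mulVec x) ≤ (∑ j, ∑ k, |A j k|) * lpnorm p x := by
  have hL : 0 ≤ lpnorm p x := lpnorm_nonneg hp x
  have key : ∀ j, |A.mulVec x j| ≤ (∑ k, |A j k|) * lpnorm p x := by
    intro j
    refine (mulVec_abs_le A x j).trans ?_
    rw [Finset.sum_mul]
    exact Finset.sum_le_sum fun k _ =>
      mul_le_mul_of_nonneg_left (abs_le_lpnorm hp x k) (abs_nonneg _)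
  have hrow : ∀ j, (∑ k, |A j k|) * lpnorm p x ≤ (∑ j, ∑ k, |A j k|) * lpnorm p x := by
    intro j
    exact mul_le_mul_of_nonneg_right (Finset.single_le_sum
      (f := fun i => ∑ k, |A i k|)
      (fun i _ => Finset.sum_nonneg fun k _ => abs_nonneg _) (Finset.mem_univ j)) hL
  have hC : 0 ≤ (∑ j, ∑ k, |A j k|) * lpnorm p x := by positivity
  rcases hp with rfl | rfl | rfl
  · rw [lpnorm_one_def]
    calc ∑ j, |A.mulVec x j| ≤ ∑ j, (∑ k, |A j k|) * lpnorm 1 x :=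
          Finset.sum_le_sum fun j _ => key j
      _ = (∑ j, ∑ k, |A j k|) * lpnorm 1 x := by rw [Finset.sum_mul]
  · refine (lpnorm_two_le_one _).trans ?_
    rw [lpnorm_one_def]
    calc ∑ j, |A.mulVec x j| ≤ ∑ j, (∑ k, |A j k|) * lpnorm 2 x :=
          Finset.sum_le_sum fun j _ => key j
      _ = (∑ j, ∑ k, |A j k|) * lpnorm 2 x := by rw [Finset.sum_mul]
  · rw [lpnorm_top_def]
    exact Real.iSup_le (fun j => (key j).trans (hrow j)) hC

lemma opNorm_le {p : ENNReal} (hp : IsP p) {A : Matrix (Fin n) (Fin n) ℝ} {C : ℝ}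
    (hC : 0 ≤ C) (h : ∀ x, lpnorm p (A.mulVec x) ≤ C * lpnorm p x) : opNorm p A ≤ C := by
  refine Real.sSup_le ?_ hC
  rintro c ⟨x, hx, rfl⟩
  rw [div_le_iff₀ (lpnorm_pos hp hx)]
  exact h x

lemma bddAbove_opSet {p : ENNReal} (hp : IsP p) (A : Matrix (Fin n) (Fin n) ℝ) :
    BddAbove {c : ℝ | ∃ x : Fin n → ℝ, x ≠ 0 ∧ c = lpnorm p (A.mulVec x) / lpnorm p x} := by
  refine ⟨∑ j, ∑ k, |A j k|, ?_⟩
  rintro c ⟨x, hx, rfl⟩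
  rw [div_le_iff₀ (lpnorm_pos hp hx)]
  exact lpnorm_mulVec_le_total hp A x

lemma le_opNorm {p : ENNReal} (hp : IsP p) (A : Matrix (Fin n) (Fin n) ℝ)
    {x : Fin n → ℝ} (hx : x ≠ 0) :
    lpnorm p (A.mulVec x) / lpnorm p x ≤ opNorm p A :=
  le_csSup (bddAbove_opSet hp A) ⟨x, hx, rfl⟩

lemma opNorm_nonneg {p : ENNReal} (hp : IsP p) (A : Matrix (Fin n) (Fin n) ℝ) :
    0 ≤ opNorm p A :=
  Real.sSup_nonneg (by
    rintro c ⟨x, hx, rfl⟩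
    exact div_nonneg (lpnorm_nonneg hp _) (lpnorm_nonneg hp _))

lemma lpnorm_zero {p : ENNReal} (hp : IsP p) : lpnorm p (0 : Fin n → ℝ) = 0 := by
  rcases hp with rfl | rfl | rfl
  · simp [lpnorm_one_def]
  · simp [lpnorm_two_def]
  · rw [lpnorm_top_def]
    refine le_antisymm (Real.iSup_le (fun j => by simp) le_rfl)
      (Real.iSup_nonneg fun j => abs_nonneg _)

lemma lpnorm_mulVec_le_opNorm {p : ENNReal} (hp : IsP p) (A : Matrix (Fin n) (Fin n) ℝ)
    (x : Fin n → ℝ) : lpnorm p (A.mulVec x) ≤ opNorm p A * lpnorm p x := by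
  by_cases hx : x = 0
  · subst hx
    simp [Matrix.mulVec_zero, lpnorm_zero hp]
  · rw [← div_le_iff₀ (lpnorm_pos hp hx)]
    exact le_opNorm hp A hx

lemma opNorm_zero_dim (p : ENNReal) (A : Matrix (Fin 0) (Fin 0) ℝ) : opNorm p A = 0 := by
  have : {c : ℝ | ∃ x : Fin 0 → ℝ, x ≠ 0 ∧ c = lpnorm p (A.mulVec x) / lpnorm p x} = ∅ := by
    ext c
    simp only [Set.mem_setOf_eq, Set.mem_empty_iff_false, iff_false, not_exists]
    intro x ⟨hx, _⟩
    exact hx (Subsingleton.elim _ _)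
  rw [opNorm, this, Real.sSup_empty]


lemma opNorm_top_eq [Nonempty (Fin n)] (A : Matrix (Fin n) (Fin n) ℝ) :
    opNorm ⊤ A = ⨆ j, ∑ k, |A j k| := by
  set M := ⨆ j, ∑ k, |A j k| with hM
  have hMn : 0 ≤ M := Real.iSup_nonneg fun j => Finset.sum_nonneg fun k _ => abs_nonneg _
  have hrow : ∀ j, (∑ k, |A j k|) ≤ M := fun j =>
    le_ciSup (Set.Finite.bddAbove (Set.finite_range fun i => ∑ k, |A i k|)) j
  refine le_antisymm ?_ ?_
  · refine opNorm_le (Or.inr (Or.inr rfl)) hMn fun x => ?_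
    rw [lpnorm_top_def]
    refine Real.iSup_le (fun j => ?_)
      (mul_nonneg hMn (lpnorm_nonneg (Or.inr (Or.inr rfl)) x))
    refine (mulVec_abs_le A x j).trans ?_
    calc ∑ k, |A j k| * |x k| ≤ ∑ k, |A j k| * lpnorm ⊤ x :=
        Finset.sum_le_sum fun k _ => mul_le_mul_of_nonneg_left
          (abs_le_lpnorm (Or.inr (Or.inr rfl)) x k) (abs_nonneg _)
      _ = (∑ k, |A j k|) * lpnorm ⊤ x := by rw [Finset.sum_mul]
      _ ≤ M * lpnorm ⊤ x := mul_le_mul_of_nonneg_right (hrow j)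
          (lpnorm_nonneg (Or.inr (Or.inr rfl)) x)
  · obtain ⟨j0, hj0⟩ := Finite.exists_max (fun j => ∑ k, |A j k|)
    have hMj0 : M = ∑ k, |A j0 k| :=
      le_antisymm (Real.iSup_le (fun j => hj0 j) (Finset.sum_nonneg fun k _ => abs_nonneg _))
        (hrow j0)
    set x : Fin n → ℝ := fun k => if 0 ≤ A j0 k then 1 else -1 with hx
    have hxabs : ∀ k, |x k| = 1 := by
      intro k; by_cases h : 0 ≤ A j0 k <;> simp [hx, h]
    have hxne : x ≠ 0 := by
      intro h
      have := congrFun h j0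
      simp only [Pi.zero_apply] at this
      have := hxabs j0
      rw [‹x j0 = 0›] at this
      norm_num at this
    have hxnorm : lpnorm ⊤ x = 1 := by
      rw [lpnorm_top_def]
      have : (fun k => |x k|) = fun _ => (1:ℝ) := funext hxabs
      rw [this, ciSup_const]
    have hAx : A.mulVec x j0 = ∑ k, |A j0 k| := by
      rw [Matrix.mulVec, dotProduct]
      refine Finset.sum_congr rfl fun k _ => ?_
      by_cases h : 0 ≤ A j0 k
      · simp [hx, h, abs_of_nonneg h]
      · push_neg at h
        simp [hx, if_neg (not_le.mpr h), abs_of_neg h]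
    have hMle : M ≤ lpnorm ⊤ (A.mulVec x) / lpnorm ⊤ x := by
      rw [hxnorm, div_one, hMj0, ← hAx]
      exact (le_abs_self _).trans (abs_le_lpnorm (Or.inr (Or.inr rfl)) _ j0)
    exact hMle.trans (le_opNorm (Or.inr (Or.inr rfl)) A hxne)

lemma opNorm_one_eq [Nonempty (Fin n)] (A : Matrix (Fin n) (Fin n) ℝ) :
    opNorm 1 A = ⨆ k, ∑ j, |A j k| := by
  set M := ⨆ k, ∑ j, |A j k| with hM
  have hMn : 0 ≤ M := Real.iSup_nonneg fun k => Finset.sum_nonneg fun j _ => abs_nonneg _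
  have hcol : ∀ k, (∑ j, |A j k|) ≤ M := fun k =>
    le_ciSup (Set.Finite.bddAbove (Set.finite_range fun i => ∑ j, |A j i|)) k
  refine le_antisymm ?_ ?_
  · refine opNorm_le (Or.inl rfl) hMn fun x => ?_
    rw [lpnorm_one_def, lpnorm_one_def]
    calc ∑ j, |A.mulVec x j| ≤ ∑ j, ∑ k, |A j k| * |x k| :=
        Finset.sum_le_sum fun j _ => mulVec_abs_le A x j
      _ = ∑ k, (∑ j, |A j k|) * |x k| := by
          rw [Finset.sum_comm]
          exact Finset.sum_congr rfl fun k _ => (Finset.sum_mul _ _ _).symm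
      _ ≤ ∑ k, M * |x k| := Finset.sum_le_sum fun k _ =>
          mul_le_mul_of_nonneg_right (hcol k) (abs_nonneg _)
      _ = M * ∑ k, |x k| := (Finset.mul_sum _ _ _).symm
  · obtain ⟨k0, hk0⟩ := Finite.exists_max (fun k => ∑ j, |A j k|)
    have hMk0 : M = ∑ j, |A j k0| :=
      le_antisymm (Real.iSup_le (fun k => hk0 k) (Finset.sum_nonneg fun j _ => abs_nonneg _))
        (hcol k0)
    set x : Fin n → ℝ := Pi.single k0 1 with hx
    have hxne : x ≠ 0 := by
      intro h
      have := congrFun h k0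
      simp [hx] at this
    have hxnorm : lpnorm 1 x = 1 := by
      rw [lpnorm_one_def]
      simp [hx, Pi.single_apply, apply_ite]
    have hAx : A.mulVec x = fun j => A j k0 := by
      funext j
      rw [hx, Matrix.mulVec_single]
      simp
    have hMle : M ≤ lpnorm 1 (A.mulVec x) / lpnorm 1 x := by
      rw [hxnorm, div_one, hMk0, hAx, lpnorm_one_def]
    exact hMle.trans (le_opNorm (Or.inl rfl) A hxne)


lemma one_le_opNorm_two [Nonempty (Fin n)] (A : Matrix (Fin n) (Fin n) ℝ)
    (hdiag : ∀ j, 1 ≤ |A j j|) : 1 ≤ opNorm 2 A := by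
  have hp2 : IsP 2 := Or.inr (Or.inl rfl)
  set j0 : Fin n := Classical.arbitrary (Fin n)
  set x : Fin n → ℝ := Pi.single j0 1 with hx
  have hxne : x ≠ 0 := by
    intro h
    have := congrFun h j0
    simp [hx] at this
  have hxnorm : lpnorm 2 x = 1 := by
    rw [lpnorm_two_def]
    have : ∀ j, |x j| ^ 2 = if j = j0 then (1:ℝ) else 0 := by
      intro j
      by_cases h : j = j0 <;> simp [hx, Pi.single_apply, h]
    rw [Finset.sum_congr rfl fun j _ => this j]
    simp
  have hAx : |A.mulVec x j0| = |A j0 j0| := by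
    rw [hx, Matrix.mulVec_single]
    simp
  have h1 : (1:ℝ) ≤ lpnorm 2 (A.mulVec x) := by
    refine (hdiag j0).trans ?_
    rw [← hAx]
    exact abs_le_lpnorm hp2 _ j0
  have h2 := le_opNorm hp2 A hxne
  rw [hxnorm, div_one] at h2
  exact h1.trans h2

lemma one_le_inv_diag {A : Matrix (Fin n) (Fin n) ℝ} (hpd : A.PosDef) (hsymm : A.IsSymm)
    (hdiag : ∀ j, A j j = 1) (j : Fin n) : 1 ≤ A⁻¹ j j := by
  have hdet : IsUnit A.det := hpd.det_pos.ne'.isUnit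
  have hAAinv : A * A⁻¹ = 1 := Matrix.mul_nonsing_inv A hdet
  set e : Fin n → ℝ := Pi.single j 1 with he
  set v : Fin n → ℝ := A⁻¹.mulVec e with hv
  have hAv : A.mulVec v = e := by
    rw [hv, Matrix.mulVec_mulVec, hAAinv, Matrix.one_mulVec]
  have hvj : v j = A⁻¹ j j := by
    rw [hv, he, Matrix.mulVec_single]
    simp
  have hvne : v ≠ 0 := by
    intro h
    rw [h, Matrix.mulVec_zero] at hAv
    have := congrFun hAv j
    simp [he] at this
  have hd : 0 < v ⬝ᵥ A.mulVec v := by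
    have := hpd.dotProduct_mulVec_pos hvne
    simpa using this
  set d : ℝ := v ⬝ᵥ A.mulVec v with hdd
  have hdval : d = A⁻¹ j j := by
    rw [hdd, hAv, he, dotProduct_single, mul_one, hvj]
  -- cross terms
  have hcross1 : e ⬝ᵥ A.mulVec v = 1 := by
    rw [hAv, he, single_dotProduct, one_mul, Pi.single_eq_same]
  have hcross2 : v ⬝ᵥ A.mulVec e = 1 := by
    have hswap : v ⬝ᵥ A.mulVec e = A.mulVec v ⬝ᵥ e := by
      rw [Matrix.dotProduct_mulVec, ← Matrix.mulVec_transpose, hsymm.eq]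
    rw [hswap, hAv, he, dotProduct_single, mul_one, Pi.single_eq_same]
  have heAe : e ⬝ᵥ A.mulVec e = 1 := by
    rw [he, Matrix.mulVec_single]
    simp [single_dotProduct, hdiag j]
  -- quadratic form at w = e - (1/d) • v
  set w : Fin n → ℝ := e - (1/d) • v with hw
  have hQ : 0 ≤ w ⬝ᵥ A.mulVec w := by
    have := hpd.posSemidef.dotProduct_mulVec_nonneg w
    simpa using this
  have hexp : w ⬝ᵥ A.mulVec w = 1 - 2/d + 1/d := by
    rw [hw]
    rw [Matrix.mulVec_sub, Matrix.mulVec_smul]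
    rw [sub_dotProduct, smul_dotProduct, dotProduct_sub,
      dotProduct_sub, dotProduct_smul, dotProduct_smul]
    rw [heAe, hcross1, hcross2, ← hdd]
    field_simp [hd.ne']
    ring_nf
    rw [mul_inv_cancel₀ hd.ne', ← mul_pow, mul_inv_cancel₀ hd.ne']
    ring
  rw [hexp] at hQ
  have h2d : 2/d = 2*(1/d) := by ring
  have h1d : 1/d ≤ 1 := by linarith
  have hfin : 1 ≤ d := (div_le_one hd).mp h1d
  rwa [hdval] at hfin

end CNE

section Main
open CNE
variable {n : ℕ}

lemma main_core (a b : ℝ) (ha : 0 < a) (hb : 0 < b)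
    (n : ℕ) (A : Matrix (Fin n) (Fin n) ℝ)
    (hsymm : A.IsSymm) (hpd : A.PosDef) (hdiag : ∀ j, A j j = 1)
    (hoff : ∀ j k, j ≠ k → |A j k| ≤ a / n) (hb2 : opNorm 2 A⁻¹ ≤ b) :
    opNorm ⊤ A * opNorm ⊤ A⁻¹ = opNorm 1 A * opNorm 1 A⁻¹ ∧
    opNorm ⊤ A * opNorm ⊤ A⁻¹ ≤ ((1+a) * (1 + a + a^2*b)) * (opNorm 2 A * opNorm 2 A⁻¹) := by
  have hp2 : IsP 2 := Or.inr (Or.inl rfl)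
  have hpt : IsP ⊤ := Or.inr (Or.inr rfl)
  rcases Nat.eq_zero_or_pos n with hn | hn
  · subst hn
    rw [opNorm_zero_dim, opNorm_zero_dim, opNorm_zero_dim, opNorm_zero_dim,
      opNorm_zero_dim, opNorm_zero_dim]
    norm_num
  haveI : Nonempty (Fin n) := Fin.pos_iff_nonempty.mp hn
  have hnR : (0:ℝ) < n := by exact_mod_cast hn
  have hdet : IsUnit A.det := hpd.det_pos.ne'.isUnit
  have hsymm' : A⁻¹.IsSymm := by
    rw [Matrix.IsSymm, Matrix.transpose_nonsing_inv, hsymm.eq]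
  -- equality of the ⊤- and 1- condition numbers
  have heq : ∀ (B : Matrix (Fin n) (Fin n) ℝ), B.IsSymm → opNorm ⊤ B = opNorm 1 B := by
    intro B hB
    rw [opNorm_top_eq, opNorm_one_eq]
    congr 1
    funext j
    exact Finset.sum_congr rfl fun k _ => by rw [hB.apply]
  -- the perturbation X
  set X : Matrix (Fin n) (Fin n) ℝ := A - 1 with hX
  have hXent : ∀ j k, |X j k| ≤ a / n := by
    intro j k
    by_cases h : j = k
    · subst h
      simp [hX, Matrix.sub_apply, Matrix.one_apply_eq, hdiag j]
      positivity
    · rw [hX]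
      simpa [Matrix.sub_apply, Matrix.one_apply_ne h] using hoff j k h
  have hXsq : ∀ (u : Fin n → ℝ), (∀ l, |u l| ≤ a / n) →
      lpnorm 2 u ≤ Real.sqrt (n * (a/n)^2) := by
    intro u hu
    rw [lpnorm_two_def]
    refine Real.sqrt_le_sqrt ?_
    calc ∑ l, |u l| ^ 2 ≤ ∑ _l : Fin n, (a/n)^2 := Finset.sum_le_sum fun l _ =>
        pow_le_pow_left₀ (abs_nonneg _) (hu l) 2
      _ = n * (a/n)^2 := by rw [Finset.sum_const, Finset.card_univ, Fintype.card_fin,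
            nsmul_eq_mul]
  -- the matrix identity  A⁻¹ = 1 - X + X A⁻¹ X
  have hmul1 : A * A⁻¹ = 1 := Matrix.mul_nonsing_inv A hdet
  have hmul2 : A⁻¹ * A = 1 := Matrix.nonsing_inv_mul A hdet
  have e1 : A⁻¹ * X = 1 - A⁻¹ := by
    rw [hX, Matrix.mul_sub, hmul2, Matrix.mul_one]
  have e2 : X * A⁻¹ = 1 - A⁻¹ := by
    rw [hX, Matrix.sub_mul, hmul1, Matrix.one_mul]
  have hinv_id : A⁻¹ = 1 - X + X * A⁻¹ * X := by
    have h3 : X * A⁻¹ * X = X - (1 - A⁻¹) := by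
      rw [e2, Matrix.sub_mul, Matrix.one_mul, e1]
    rw [h3]
    abel
  -- bound on middle-term entries
  have hbnd : ∀ y : Fin n → ℝ, lpnorm 2 (A⁻¹.mulVec y) ≤ b * lpnorm 2 y := fun y =>
    (lpnorm_mulVec_le_opNorm hp2 A⁻¹ y).trans
      (mul_le_mul_of_nonneg_right hb2 (lpnorm_nonneg hp2 y))
  have hmid : ∀ j k, |(X * A⁻¹ * X) j k| ≤ a^2 * b / n := by
    intro j k
    have hrepr : (X * A⁻¹ * X) j k
        = ∑ l, X j l * (A⁻¹.mulVec (fun m => X m k)) l := by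
      rw [Matrix.mul_assoc, Matrix.mul_apply]
      refine Finset.sum_congr rfl fun l _ => ?_
      rw [Matrix.mul_apply]
      rfl
    rw [hrepr]
    have h1 := abs_dot_le (fun l => X j l) (fun l => (A⁻¹.mulVec (fun m => X m k)) l)
    refine h1.trans ?_
    have h2 : lpnorm 2 (fun l => X j l) ≤ Real.sqrt (n * (a/n)^2) :=
      hXsq _ fun l => hXent j l
    have h3 : lpnorm 2 (fun l => (A⁻¹.mulVec (fun m => X m k)) l)
        ≤ b * Real.sqrt (n * (a/n)^2) := by
      refine (hbnd _).trans ?_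
      exact mul_le_mul_of_nonneg_left (hXsq _ fun l => hXent l k) hb.le
    calc lpnorm 2 (fun l => X j l) * lpnorm 2 (fun l => (A⁻¹.mulVec (fun m => X m k)) l)
        ≤ Real.sqrt (n * (a/n)^2) * (b * Real.sqrt (n * (a/n)^2)) := by
          refine mul_le_mul h2 h3 (lpnorm_nonneg hp2 _) (Real.sqrt_nonneg _)
      _ = b * (Real.sqrt (n * (a/n)^2) * Real.sqrt (n * (a/n)^2)) := by ring
      _ = b * (n * (a/n)^2) := by
          rw [Real.mul_self_sqrt (by positivity)]
      _ = a^2 * b / n := by field_simp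
  -- row-sum bounds
  have hconstsum : (∑ _k : Fin n, (a/n)) = a := by
    rw [Finset.sum_const, Finset.card_univ, Fintype.card_fin, nsmul_eq_mul]
    field_simp
  have htopA : opNorm ⊤ A ≤ 1 + a := by
    rw [opNorm_top_eq]
    refine Real.iSup_le (fun j => ?_) (by positivity)
    have hsplit : ∑ k, |A j k| = |A j j| + ∑ k ∈ Finset.univ.erase j, |A j k| :=
      (Finset.add_sum_erase Finset.univ _ (Finset.mem_univ j)).symm
    rw [hsplit, hdiag j, abs_one]
    have : ∑ k ∈ Finset.univ.erase j, |A j k| ≤ a := by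
      calc ∑ k ∈ Finset.univ.erase j, |A j k| ≤ ∑ k ∈ Finset.univ.erase j, (a/n) :=
          Finset.sum_le_sum fun k hk => hoff j k (Finset.ne_of_mem_erase hk).symm
        _ ≤ ∑ _k : Fin n, (a/n) := Finset.sum_le_sum_of_subset_of_nonneg
            (Finset.erase_subset _ _) (fun k _ _ => by positivity)
        _ = a := hconstsum
    linarith
  have hone_row : ∀ j : Fin n, (∑ k, |(1 : Matrix (Fin n) (Fin n) ℝ) j k|) = 1 := by
    intro j
    have : ∀ k, |(1 : Matrix (Fin n) (Fin n) ℝ) j k| = if j = k then (1:ℝ) else 0 := by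
      intro k
      by_cases h : j = k <;> simp [Matrix.one_apply, h]
    rw [Finset.sum_congr rfl fun k _ => this k]
    simp
  have htopAinv : opNorm ⊤ A⁻¹ ≤ 1 + a + a^2*b := by
    rw [opNorm_top_eq]
    refine Real.iSup_le (fun j => ?_) (by positivity)
    have hentry : ∀ k, |A⁻¹ j k| ≤ |(1 : Matrix (Fin n) (Fin n) ℝ) j k| + |X j k|
        + |(X * A⁻¹ * X) j k| := by
      intro k
      have : A⁻¹ j k = (1 : Matrix (Fin n) (Fin n) ℝ) j k - X j k + (X * A⁻¹ * X) j k := by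
        conv_lhs => rw [hinv_id]
        simp [Matrix.add_apply, Matrix.sub_apply]
      rw [this]
      exact (abs_add_le _ _).trans (by gcongr; exact abs_sub _ _)
    calc ∑ k, |A⁻¹ j k| ≤ ∑ k, (|(1 : Matrix (Fin n) (Fin n) ℝ) j k| + |X j k|
          + |(X * A⁻¹ * X) j k|) := Finset.sum_le_sum fun k _ => hentry k
      _ = (∑ k, |(1 : Matrix (Fin n) (Fin n) ℝ) j k|) + (∑ k, |X j k|)
          + (∑ k, |(X * A⁻¹ * X) j k|) := by rw [Finset.sum_add_distrib, Finset.sum_add_distrib]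
      _ ≤ 1 + a + a^2*b := by
          have hx1 : ∑ k, |X j k| ≤ a := by
            calc ∑ k, |X j k| ≤ ∑ _k : Fin n, (a/n) := Finset.sum_le_sum fun k _ => hXent j k
              _ = a := hconstsum
          have hx2 : ∑ k, |(X * A⁻¹ * X) j k| ≤ a^2*b := by
            calc ∑ k, |(X * A⁻¹ * X) j k| ≤ ∑ _k : Fin n, (a^2*b/n) :=
                Finset.sum_le_sum fun k _ => hmid j k
              _ = a^2*b := by
                rw [Finset.sum_const, Finset.card_univ, Fintype.card_fin, nsmul_eq_mul]
                field_simp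
          rw [hone_row j]
          linarith
  -- spectral condition number at least one
  have h2A : 1 ≤ opNorm 2 A :=
    one_le_opNorm_two A fun j => by rw [hdiag j]; norm_num
  have h2Ainv : 1 ≤ opNorm 2 A⁻¹ :=
    one_le_opNorm_two A⁻¹ fun j =>
      (one_le_inv_diag hpd hsymm hdiag j).trans (le_abs_self _)
  constructor
  · rw [heq A hsymm, heq A⁻¹ hsymm']
  · calc opNorm ⊤ A * opNorm ⊤ A⁻¹ ≤ (1+a) * (1 + a + a^2*b) :=
        mul_le_mul htopA htopAinv (opNorm_nonneg hpt A⁻¹) (by positivity)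
      _ ≤ ((1+a) * (1 + a + a^2*b)) * (opNorm 2 A * opNorm 2 A⁻¹) :=
          le_mul_of_one_le_right (by positivity) (by nlinarith)
end Main


/-- Lemma 3.2 of [Isaev2012], formula (3.8): under condition (A) the
condition numbers satisfy `μ_∞(A) = μ₁(A) ≤ c μ₂(A)`. -/
theorem condition_number_estimate (a b : ℝ) (ha : 0 < a) (hb : 0 < b) :
    ∃ c : ℝ, 0 < c ∧
      ∀ (n : ℕ) (A : Matrix (Fin n) (Fin n) ℝ), CondA a b A →
        opNorm ⊤ A * opNorm ⊤ A⁻¹ = opNorm 1 A * opNorm 1 A⁻¹ ∧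
        opNorm ⊤ A * opNorm ⊤ A⁻¹ ≤ c * (opNorm 2 A * opNorm 2 A⁻¹) := by
  refine ⟨(1+a) * (1 + a + a^2*b), by positivity, ?_⟩
  intro n A hA
  obtain ⟨hsymm, hpd, hdiag, hoff, hb2⟩ := hA
  exact main_core a b ha hb n A hsymm hpd hdiag hoff hb2
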